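/- arXiv:1907.01107 — 4 statements merged into one kernel-verified Lean document; each statement's English description precedes it below -/
import Mathlib

section
/- Let G_k(n) = (((1-i)/2) + (−1|n)·((1+i)/2)) · Σ_{a mod n} (a|n) e(ak/n) for odd n, where (·|n) is the Jacobi symbol and e(x) = exp(2πix). Then for coprime odd integers m and n, G_k(mn) = G_k(m) · G_k(n). -/
open Complex

/-- The Gauss-type sum
`G_k(n) = ((1-i)/2 + (−1|n)(1+i)/2) · Σ_{a mod n} (a|n) e(ak/n)` for odd `n`,
where `(·|n)` is the Jacobi symbol. -/
noncomputable def gaussG (k : ℤ) (n : ℕ) : ℂ :=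
  ((1 - I)/2 + (jacobiSym (-1) n : ℂ) * (1 + I)/2) *
    ∑ a ∈ Finset.range n,
      (jacobiSym (a : ℤ) n : ℂ) * Complex.exp (2 * Real.pi * I * a * k / n)

/-- Cancellation for the CRT parametrization `(a, b) ↦ a*n + b*m`. -/
lemma crt_cancel {m n x₁ y₁ x₂ y₂ : ℕ} (hmn : Nat.Coprime m n)
    (hx₁ : x₁ < m) (hx₂ : x₂ < m)
    (h : x₁ * n + y₁ * m ≡ x₂ * n + y₂ * m [MOD m]) : x₁ = x₂ := by
  have h1 : x₁ * n ≡ x₂ * n [MOD m] := by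
    have e1 : (x₁ * n + y₁ * m) % m = (x₁ * n) % m := by
      simp [Nat.add_mul_mod_self_right]
    have e2 : (x₂ * n + y₂ * m) % m = (x₂ * n) % m := by
      simp [Nat.add_mul_mod_self_right]
    unfold Nat.ModEq at h ⊢
    rw [← e1, ← e2]; exact h
  exact (Nat.ModEq.cancel_right_of_coprime hmn h1).eq_of_lt_of_lt hx₁ hx₂

lemma crt_inj {m n : ℕ} (hmn : Nat.Coprime m n) :
    ∀ p₁ ∈ (Finset.range m) ×ˢ (Finset.range n),
    ∀ p₂ ∈ (Finset.range m) ×ˢ (Finset.range n),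
      (p₁.1 * n + p₁.2 * m) % (m * n) = (p₂.1 * n + p₂.2 * m) % (m * n) →
      p₁ = p₂ := by
  rintro ⟨a₁, b₁⟩ h₁ ⟨a₂, b₂⟩ h₂ h
  simp only [Finset.mem_product, Finset.mem_range] at h₁ h₂
  have hmod : a₁ * n + b₁ * m ≡ a₂ * n + b₂ * m [MOD m * n] := h
  have hm' : a₁ * n + b₁ * m ≡ a₂ * n + b₂ * m [MOD m] := hmod.of_mul_right n
  have hn' : b₁ * m + a₁ * n ≡ b₂ * m + a₂ * n [MOD n] := by
    have := hmod.of_mul_left m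
    simpa [add_comm] using this
  exact Prod.ext (crt_cancel hmn h₁.1 h₂.1 hm')
    (crt_cancel hmn.symm h₁.2 h₂.2 hn')

/-- Splitting a sum over `range (m*n)` along the CRT-style decomposition
`c = a*n + b*m`. -/
lemma sum_range_mul_eq {m n : ℕ} (hm : 0 < m) (hn : 0 < n)
    (hmn : Nat.Coprime m n) (f : ℕ → ℂ) (hf : ∀ c, f (c % (m * n)) = f c) :
    ∑ c ∈ Finset.range (m * n), f c
      = ∑ a ∈ Finset.range m, ∑ b ∈ Finset.range n, f (a * n + b * m) := by
  rw [← Finset.sum_product']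
  have hcard : (Finset.range (m * n)).card
      ≤ ((Finset.range m) ×ˢ (Finset.range n)).card := by
    simp [Finset.card_product]
  refine (Finset.sum_bij
    (i := fun (p : ℕ × ℕ) _ => (p.1 * n + p.2 * m) % (m * n))
    (fun p _ => Finset.mem_range.mpr (Nat.mod_lt _ (Nat.mul_pos hm hn)))
    (fun p₁ h₁ p₂ h₂ h => crt_inj hmn p₁ h₁ p₂ h₂ h) ?_ ?_).symm
  · -- surjectivity
    intro c hc
    obtain ⟨p, hp, hpc⟩ := Finset.surj_on_of_inj_on_of_card_le
      (fun (p : ℕ × ℕ) _ => (p.1 * n + p.2 * m) % (m * n))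
      (fun p _ => Finset.mem_range.mpr (Nat.mod_lt _ (Nat.mul_pos hm hn)))
      (fun p₁ p₂ h₁ h₂ h => crt_inj hmn p₁ h₁ p₂ h₂ h)
      hcard c hc
    exact ⟨p, hp, hpc.symm⟩
  · -- values agree
    rintro ⟨a, b⟩ _
    exact (hf (a * n + b * m)).symm

/-- The full Gauss-sum term only depends on `c` mod `N`. -/
lemma term_mod (k : ℤ) (N : ℕ) (hN : 0 < N) (c : ℕ) :
    (jacobiSym ((c % N : ℕ) : ℤ) N : ℂ)
        * Complex.exp (2 * Real.pi * I * (c % N : ℕ) * k / N)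
      = (jacobiSym (c : ℤ) N : ℂ) * Complex.exp (2 * Real.pi * I * c * k / N) := by
  have hNC : (N : ℂ) ≠ 0 := by exact_mod_cast hN.ne'
  have hJ : jacobiSym ((c % N : ℕ) : ℤ) N = jacobiSym (c : ℤ) N := by
    rw [jacobiSym.mod_left (c : ℤ) N]
    congr 1
  have hE : Complex.exp (2 * Real.pi * I * (c % N : ℕ) * k / N)
      = Complex.exp (2 * Real.pi * I * c * k / N) := by
    have hc : (c : ℂ) = (N : ℂ) * (c / N : ℕ) + ((c % N : ℕ) : ℂ) := by
      exact_mod_cast congrArg (Nat.cast : ℕ → ℂ) (Nat.div_add_mod c N).symm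
    have hcast : (((c / N : ℕ) * k : ℤ) : ℂ) = ((c / N : ℕ) : ℂ) * (k : ℂ) := by
      rw [Int.cast_mul, Int.cast_natCast]
    rw [show 2 * Real.pi * I * (c : ℂ) * k / N
          = (((c / N : ℕ) * k : ℤ) : ℂ) * (2 * Real.pi * I)
            + 2 * Real.pi * I * ((c % N : ℕ) : ℂ) * k / N by
        rw [hcast, hc]; field_simp]
    rw [Complex.exp_add, Complex.exp_int_mul_two_pi_mul_I, one_mul]
  rw [hJ, hE]

/-- Factorization of the Gauss-sum term along the CRT decomposition. -/
lemma term_factor (k : ℤ) {m n : ℕ} (hm : 0 < m) (hn : 0 < n) (a b : ℕ) :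
    (jacobiSym ((a * n + b * m : ℕ) : ℤ) (m * n) : ℂ)
        * Complex.exp (2 * Real.pi * I * (a * n + b * m : ℕ) * k / ((m * n : ℕ) : ℂ))
      = ((jacobiSym (n : ℤ) m : ℂ) * (jacobiSym (m : ℤ) n : ℂ)) *
        (((jacobiSym (a : ℤ) m : ℂ) * Complex.exp (2 * Real.pi * I * a * k / m)) *
         ((jacobiSym (b : ℤ) n : ℂ) * Complex.exp (2 * Real.pi * I * b * k / n))) := by
  have hmC : (m : ℂ) ≠ 0 := by exact_mod_cast hm.ne'
  have hnC : (n : ℂ) ≠ 0 := by exact_mod_cast hn.ne'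
  have hJ : jacobiSym ((a * n + b * m : ℕ) : ℤ) (m * n)
      = (jacobiSym (n : ℤ) m * jacobiSym (m : ℤ) n)
        * (jacobiSym (a : ℤ) m * jacobiSym (b : ℤ) n) := by
    rw [jacobiSym.mul_right' _ hm.ne' hn.ne']
    have h1 : jacobiSym ((a * n + b * m : ℕ) : ℤ) m
        = jacobiSym (a : ℤ) m * jacobiSym (n : ℤ) m := by
      have : jacobiSym ((a * n + b * m : ℕ) : ℤ) m
          = jacobiSym ((a : ℤ) * n) m := by
        apply jacobiSym.mod_left'
        push_cast
        exact Int.add_mul_emod_self_right _ _ _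
      rw [this, jacobiSym.mul_left]
    have h2 : jacobiSym ((a * n + b * m : ℕ) : ℤ) n
        = jacobiSym (b : ℤ) n * jacobiSym (m : ℤ) n := by
      have : jacobiSym ((a * n + b * m : ℕ) : ℤ) n
          = jacobiSym ((b : ℤ) * m) n := by
        apply jacobiSym.mod_left'
        push_cast
        rw [add_comm]
        exact Int.add_mul_emod_self_right _ _ _
      rw [this, jacobiSym.mul_left]
    rw [h1, h2]; ring
  have hE : Complex.exp (2 * Real.pi * I * (a * n + b * m : ℕ) * k / ((m * n : ℕ) : ℂ))
      = Complex.exp (2 * Real.pi * I * a * k / m)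
        * Complex.exp (2 * Real.pi * I * b * k / n) := by
    rw [← Complex.exp_add]
    congr 1
    push_cast
    field_simp
  rw [hJ, hE]
  push_cast
  ring

/-- Quadratic-reciprocity-based identity for the prefactors. -/
lemma prefactor_mul {m n : ℕ} (hm : Odd m) (hn : Odd n) (hmn : Nat.Coprime m n) :
    ((1 - I)/2 + (jacobiSym (-1) (m * n) : ℂ) * (1 + I)/2)
        * ((jacobiSym (n : ℤ) m : ℂ) * (jacobiSym (m : ℤ) n : ℂ))
      = ((1 - I)/2 + (jacobiSym (-1) m : ℂ) * (1 + I)/2)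
        * ((1 - I)/2 + (jacobiSym (-1) n : ℂ) * (1 + I)/2) := by
  have hm0 : m ≠ 0 := hm.pos.ne'
  have hn0 : n ≠ 0 := hn.pos.ne'
  have hmul : jacobiSym (-1) (m * n) = jacobiSym (-1) m * jacobiSym (-1) n :=
    jacobiSym.mul_right' (-1) hm0 hn0
  have hqm : jacobiSym (-1) m = ZMod.χ₄ m := jacobiSym.at_neg_one hm
  have hqn : jacobiSym (-1) n = ZMod.χ₄ n := jacobiSym.at_neg_one hn
  have hsq : (jacobiSym (n : ℤ) m : ℂ) * (jacobiSym (n : ℤ) m : ℂ) = 1 := by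
    have hg : ((n : ℤ).gcd m) = 1 := by
      have := hmn.symm
      simpa [Int.gcd] using this
    have h := jacobiSym.sq_one hg
    rw [sq] at h
    exact_mod_cast h
  have hrec := jacobiSym.quadratic_reciprocity_if
    (Nat.odd_iff.mp hm) (Nat.odd_iff.mp hn)
  rcases Nat.odd_mod_four_iff.mp (Nat.odd_iff.mp hm) with hm4 | hm4 <;>
    rcases Nat.odd_mod_four_iff.mp (Nat.odd_iff.mp hn) with hn4 | hn4
  · have hrec' : jacobiSym (m : ℤ) n = jacobiSym (n : ℤ) m :=
      (by simpa [hm4] using hrec : jacobiSym (n : ℤ) m = jacobiSym (m : ℤ) n).symm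
    rw [hmul, hqm, hqn, ZMod.χ₄_nat_one_mod_four hm4, ZMod.χ₄_nat_one_mod_four hn4,
      hrec']
    push_cast
    linear_combination hsq
  · have hrec' : jacobiSym (m : ℤ) n = jacobiSym (n : ℤ) m :=
      (by simpa [hm4] using hrec : jacobiSym (n : ℤ) m = jacobiSym (m : ℤ) n).symm
    rw [hmul, hqm, hqn, ZMod.χ₄_nat_one_mod_four hm4, ZMod.χ₄_nat_three_mod_four hn4,
      hrec']
    push_cast
    linear_combination (-I) * hsq
  · have hrec' : jacobiSym (m : ℤ) n = jacobiSym (n : ℤ) m :=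
      (by simpa [hn4] using hrec : jacobiSym (n : ℤ) m = jacobiSym (m : ℤ) n).symm
    rw [hmul, hqm, hqn, ZMod.χ₄_nat_three_mod_four hm4, ZMod.χ₄_nat_one_mod_four hn4,
      hrec']
    push_cast
    linear_combination (-I) * hsq
  · have hrec' : jacobiSym (m : ℤ) n = -jacobiSym (n : ℤ) m :=
      (by simpa [hm4, hn4] using hrec : -jacobiSym (n : ℤ) m = jacobiSym (m : ℤ) n).symm
    rw [hmul, hqm, hqn, ZMod.χ₄_nat_three_mod_four hm4, ZMod.χ₄_nat_three_mod_four hn4,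
      hrec']
    push_cast
    linear_combination (-1 : ℂ) * hsq - Complex.I_sq

/-- For coprime odd integers `m` and `n`, `G_k(mn) = G_k(m) G_k(n)`. -/
theorem gaussG_mul (k : ℤ) (m n : ℕ) (hm : Odd m) (hn : Odd n)
    (hmn : Nat.Coprime m n) :
    gaussG k (m * n) = gaussG k m * gaussG k n := by
  have hm0 : 0 < m := hm.pos
  have hn0 : 0 < n := hn.pos
  unfold gaussG
  have hsum : ∑ a ∈ Finset.range (m * n),
      (jacobiSym (a : ℤ) (m * n) : ℂ)
        * Complex.exp (2 * Real.pi * I * a * k / ((m * n : ℕ) : ℂ))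
      = ((jacobiSym (n : ℤ) m : ℂ) * (jacobiSym (m : ℤ) n : ℂ)) *
        ((∑ a ∈ Finset.range m,
            (jacobiSym (a : ℤ) m : ℂ) * Complex.exp (2 * Real.pi * I * a * k / m)) *
         (∑ b ∈ Finset.range n,
            (jacobiSym (b : ℤ) n : ℂ) * Complex.exp (2 * Real.pi * I * b * k / n))) := by
    rw [sum_range_mul_eq hm0 hn0 hmn _
      (fun c => term_mod k (m * n) (Nat.mul_pos hm0 hn0) c)]
    refine Eq.trans (Finset.sum_congr rfl fun a _ => Finset.sum_congr rfl
      fun b _ => term_factor k hm0 hn0 a b) ?_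
    conv_rhs => rw [Finset.sum_mul_sum, Finset.mul_sum]
    exact Finset.sum_congr rfl fun a _ => (Finset.mul_sum _ _ _).symm
  rw [hsum]
  have hpre := prefactor_mul hm hn hmn
  linear_combination ((∑ a ∈ Finset.range m,
      (jacobiSym (a : ℤ) m : ℂ) * Complex.exp (2 * Real.pi * I * a * k / m)) *
    (∑ b ∈ Finset.range n,
      (jacobiSym (b : ℤ) n : ℂ) * Complex.exp (2 * Real.pi * I * b * k / n))) * hpre
end

section
/- For a prime p and complex α, β with Re(α), Re(β) > 1/2, the sum Σ_{r≥1} Σ_{n₁n₂ = p^{2r}} τ(n₁)τ(n₂) n₁^{−α} n₂^{−β} equals (1 + p^{−2α})(1 + p^{−2β}) / ((1 − p^{−2α})²(1 − p^{−2β})²) + 4 p^{−α−β} / ((1 − p^{−2α})²(1 − p^{−2β})²) − 1. -/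
open Complex

private lemma geo1 {𝕜 : Type*} [NormedField 𝕜] [CompleteSpace 𝕜] {z : 𝕜} (hz : ‖z‖ < 1) :
    HasSum (fun n : ℕ => ((2*n+1 : ℕ) : 𝕜) * z^n) ((1+z)/(1-z)^2) := by
  have hz1 : (1:𝕜) - z ≠ 0 := by
    intro h0; rw [sub_eq_zero] at h0; rw [← h0] at hz; simp at hz
  have h1 := (hasSum_coe_mul_geometric_of_norm_lt_one hz).mul_left 2
  have h2 := hasSum_geometric_of_norm_lt_one hz
  have hfun : (fun n : ℕ => ((2*n+1 : ℕ) : 𝕜) * z^n)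
      = fun n : ℕ => 2 * ((n : 𝕜) * z^n) + z^n := by
    funext n; push_cast; ring
  rw [hfun, show (1+z)/(1-z)^2 = 2*(z/(1-z)^2) + (1-z)⁻¹ by field_simp; ring]
  exact h1.add h2

private lemma geo2 {𝕜 : Type*} [NormedField 𝕜] [CompleteSpace 𝕜] {z : 𝕜} (hz : ‖z‖ < 1) :
    HasSum (fun n : ℕ => ((2*n+2 : ℕ) : 𝕜) * z^n) (2/(1-z)^2) := by
  have hz1 : (1:𝕜) - z ≠ 0 := by
    intro h0; rw [sub_eq_zero] at h0; rw [← h0] at hz; simp at hz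
  have h1 := (hasSum_coe_mul_geometric_of_norm_lt_one hz).mul_left 2
  have h2 := (hasSum_geometric_of_norm_lt_one hz).mul_left 2
  have hfun : (fun n : ℕ => ((2*n+2 : ℕ) : 𝕜) * z^n)
      = fun n : ℕ => 2 * ((n : 𝕜) * z^n) + 2 * z^n := by
    funext n; push_cast; ring
  rw [hfun, show (2:𝕜)/(1-z)^2 = 2*(z/(1-z)^2) + 2 * (1-z)⁻¹ by field_simp; ring]
  exact h1.add h2


set_option maxHeartbeats 2000000 in
/-- For a prime `p` and `Re α, Re β > 1/2`,
`Σ_{r≥1} Σ_{n₁n₂ = p^{2r}} τ(n₁)τ(n₂) n₁^{−α} n₂^{−β}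
  = (1 + p^{−2α})(1 + p^{−2β})/((1 − p^{−2α})²(1 − p^{−2β})²)
    + 4 p^{−α−β}/((1 − p^{−2α})²(1 − p^{−2β})²) − 1`,
where the inner sum is `Σ_{a=0}^{2r} (a+1)(2r−a+1) p^{−aα − (2r−a)β}`. -/
theorem prime_power_divisor_sum (p : ℕ) (hp : p.Prime)
    (α β : ℂ) (hα : 1/2 < α.re) (hβ : 1/2 < β.re) :
    (∑' r : ℕ, if 1 ≤ r then
        ∑ a ∈ Finset.range (2*r + 1),
          ((a + 1 : ℕ) : ℂ) * ((2*r - a + 1 : ℕ) : ℂ) *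
            (p:ℂ)^(-(a:ℂ)*α - ((2*r - a : ℕ) : ℂ)*β)
      else 0)
    = (1 + (p:ℂ)^(-2*α)) * (1 + (p:ℂ)^(-2*β)) /
        ((1 - (p:ℂ)^(-2*α))^2 * (1 - (p:ℂ)^(-2*β))^2)
      + 4 * (p:ℂ)^(-α-β) / ((1 - (p:ℂ)^(-2*α))^2 * (1 - (p:ℂ)^(-2*β))^2)
      - 1 := by
  have hp0 : (p:ℂ) ≠ 0 := Nat.cast_ne_zero.mpr hp.pos.ne'
  have hp1 : 1 < (p:ℝ) := by exact_mod_cast hp.one_lt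
  set x := (p:ℂ)^(-α) with hxdef
  set y := (p:ℂ)^(-β) with hydef
  have hx : ‖x‖ < 1 := by
    rw [hxdef, Complex.norm_natCast_cpow_of_pos hp.pos]
    apply Real.rpow_lt_one_of_one_lt_of_neg hp1
    simp only [neg_re]; linarith
  have hy : ‖y‖ < 1 := by
    rw [hydef, Complex.norm_natCast_cpow_of_pos hp.pos]
    apply Real.rpow_lt_one_of_one_lt_of_neg hp1
    simp only [neg_re]; linarith
  have hu : ‖x^2‖ < 1 := by
    rw [norm_pow]
    exact pow_lt_one₀ (norm_nonneg _) hx (by norm_num)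
  have hv : ‖y^2‖ < 1 := by
    rw [norm_pow]
    exact pow_lt_one₀ (norm_nonneg _) hy (by norm_num)
  have h1u : (1:ℂ) - x^2 ≠ 0 := by
    intro h0; rw [sub_eq_zero] at h0; rw [← h0] at hu; simp at hu
  have h1v : (1:ℂ) - y^2 ≠ 0 := by
    intro h0; rw [sub_eq_zero] at h0; rw [← h0] at hv; simp at hv
  -- hasSum building blocks
  have hA1 : HasSum (fun n : ℕ => ((2*n+1 : ℕ) : ℂ) * (x^2)^n) ((1+x^2)/(1-x^2)^2) := geo1 hu
  have hB1 : HasSum (fun n : ℕ => ((2*n+1 : ℕ) : ℂ) * (y^2)^n) ((1+y^2)/(1-y^2)^2) := geo1 hv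
  have hA2 : HasSum (fun n : ℕ => ((2*n+2 : ℕ) : ℂ) * x^(2*n+1)) (x * (2/(1-x^2)^2)) := by
    have hfun : (fun n : ℕ => ((2*n+2 : ℕ) : ℂ) * x^(2*n+1))
        = fun n : ℕ => x * (((2*n+2 : ℕ) : ℂ) * (x^2)^n) := by
      funext n; rw [pow_succ', pow_mul]; ring
    rw [hfun]; exact (geo2 hu).mul_left x
  have hB2 : HasSum (fun n : ℕ => ((2*n+2 : ℕ) : ℂ) * y^(2*n+1)) (y * (2/(1-y^2)^2)) := by
    have hfun : (fun n : ℕ => ((2*n+2 : ℕ) : ℂ) * y^(2*n+1))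
        = fun n : ℕ => y * (((2*n+2 : ℕ) : ℂ) * (y^2)^n) := by
      funext n; rw [pow_succ', pow_mul]; ring
    rw [hfun]; exact (geo2 hv).mul_left y
  -- summability of norms
  have hnorm : ∀ z : ℂ, ‖z‖ < 1 → Summable (fun n : ℕ => ‖((2*n+1 : ℕ) : ℂ) * z^n‖) := by
    intro z hz
    have h : ‖(‖z‖ : ℝ)‖ < 1 := by
      rwa [Real.norm_eq_abs, _root_.abs_of_nonneg (norm_nonneg _)]
    refine (geo1 h).summable.congr fun n => ?_
    rw [norm_mul, norm_pow, Complex.norm_natCast]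
  have hnorm2 : ∀ z : ℂ, ‖z‖ < 1 → Summable (fun n : ℕ => ‖((2*n+2 : ℕ) : ℂ) * z^(2*n+1)‖) := by
    intro z hz
    have hz2 : ‖z^2‖ < 1 := by
      rw [norm_pow]; exact pow_lt_one₀ (norm_nonneg _) hz (by norm_num)
    have h : ‖(‖z^2‖ : ℝ)‖ < 1 := by
      rwa [Real.norm_eq_abs, _root_.abs_of_nonneg (norm_nonneg _)]
    refine (((geo2 h).mul_left ‖z‖).summable).congr fun n => ?_
    simp only [norm_mul, norm_pow, Complex.norm_natCast, pow_add, pow_mul, pow_one]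
    ring
  -- product sums over N x N
  have hS1 : Summable
      (fun w : ℕ × ℕ => (((2*w.1+1 : ℕ) : ℂ) * (x^2)^w.1) * (((2*w.2+1 : ℕ) : ℂ) * (y^2)^w.2)) :=
    summable_mul_of_summable_norm (R := ℂ)
      (f := fun n : ℕ => ((2*n+1 : ℕ) : ℂ) * (x^2)^n)
      (g := fun n : ℕ => ((2*n+1 : ℕ) : ℂ) * (y^2)^n) (hnorm _ hu) (hnorm _ hv)
  have hS2 : Summable
      (fun w : ℕ × ℕ => (((2*w.1+2 : ℕ) : ℂ) * x^(2*w.1+1)) * (((2*w.2+2 : ℕ) : ℂ) * y^(2*w.2+1))) :=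
    summable_mul_of_summable_norm (R := ℂ)
      (f := fun n : ℕ => ((2*n+2 : ℕ) : ℂ) * x^(2*n+1))
      (g := fun n : ℕ => ((2*n+2 : ℕ) : ℂ) * y^(2*n+1)) (hnorm2 _ hx) (hnorm2 _ hy)
  have hP1 : HasSum
      (fun w : ℕ × ℕ => (((2*w.1+1 : ℕ) : ℂ) * (x^2)^w.1) * (((2*w.2+1 : ℕ) : ℂ) * (y^2)^w.2))
      (((1+x^2)/(1-x^2)^2) * ((1+y^2)/(1-y^2)^2)) :=
    HasSum.mul (f := fun n : ℕ => ((2*n+1 : ℕ) : ℂ) * (x^2)^n)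
      (g := fun n : ℕ => ((2*n+1 : ℕ) : ℂ) * (y^2)^n) hA1 hB1 hS1
  have hP2 : HasSum
      (fun w : ℕ × ℕ => (((2*w.1+2 : ℕ) : ℂ) * x^(2*w.1+1)) * (((2*w.2+2 : ℕ) : ℂ) * y^(2*w.2+1)))
      ((x * (2/(1-x^2)^2)) * (y * (2/(1-y^2)^2))) :=
    HasSum.mul (f := fun n : ℕ => ((2*n+2 : ℕ) : ℂ) * x^(2*n+1))
      (g := fun n : ℕ => ((2*n+2 : ℕ) : ℂ) * y^(2*n+1)) hA2 hB2 hS2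
  -- reindexing
  set c : ℕ → ℕ → ℂ := fun a b => ((a+1 : ℕ) : ℂ) * ((b+1 : ℕ) : ℂ) * x^a * y^b with hc
  set F1 : ℕ × ℕ → ℂ := fun w => if w.2 % 2 = 0 ∧ w.2 ≤ 2*w.1 then c w.2 (2*w.1 - w.2) else 0
    with hF1
  set F2 : ℕ × ℕ → ℂ := fun w => if w.2 % 2 = 1 ∧ w.2 ≤ 2*w.1 then c w.2 (2*w.1 - w.2) else 0
    with hF2
  have hHF1 : HasSum F1 (((1+x^2)/(1-x^2)^2) * ((1+y^2)/(1-y^2)^2)) := by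
    have he1 : Function.Injective (fun w : ℕ × ℕ => ((w.1 + w.2, 2*w.1) : ℕ × ℕ)) := by
      rintro ⟨a1, a2⟩ ⟨b1, b2⟩ h
      simp only [Prod.mk.injEq] at h
      exact Prod.ext (by omega) (by omega)
    have hvan : ∀ w ∉ Set.range (fun w : ℕ × ℕ => ((w.1 + w.2, 2*w.1) : ℕ × ℕ)), F1 w = 0 := by
      rintro ⟨r, a⟩ hw
      rw [hF1]
      dsimp only
      split_ifs with h
      · exact absurd ⟨(a/2, r - a/2), by simp only [Prod.mk.injEq]; omega⟩ hw
      · rfl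
    refine (he1.hasSum_iff hvan).mp ?_
    have hcomp : (F1 ∘ fun w : ℕ × ℕ => ((w.1 + w.2, 2*w.1) : ℕ × ℕ))
        = fun w : ℕ × ℕ => (((2*w.1+1 : ℕ) : ℂ) * (x^2)^w.1) * (((2*w.2+1 : ℕ) : ℂ) * (y^2)^w.2) := by
      funext w
      simp only [Function.comp_apply, hF1, hc]
      rw [if_pos ⟨by omega, by omega⟩]
      have h2 : 2*(w.1+w.2) - 2*w.1 = 2*w.2 := by omega
      rw [h2, pow_mul, pow_mul]
      ring
    rw [hcomp]; exact hP1
  have hHF2 : HasSum F2 ((x * (2/(1-x^2)^2)) * (y * (2/(1-y^2)^2))) := by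
    have he2 : Function.Injective (fun w : ℕ × ℕ => ((w.1 + w.2 + 1, 2*w.1 + 1) : ℕ × ℕ)) := by
      rintro ⟨a1, a2⟩ ⟨b1, b2⟩ h
      simp only [Prod.mk.injEq] at h
      exact Prod.ext (by omega) (by omega)
    have hvan : ∀ w ∉ Set.range (fun w : ℕ × ℕ => ((w.1 + w.2 + 1, 2*w.1 + 1) : ℕ × ℕ)), F2 w = 0 := by
      rintro ⟨r, a⟩ hw
      rw [hF2]
      dsimp only
      split_ifs with h
      · exact absurd ⟨(a/2, r - a/2 - 1), by simp only [Prod.mk.injEq]; omega⟩ hw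
      · rfl
    refine (he2.hasSum_iff hvan).mp ?_
    have hcomp : (F2 ∘ fun w : ℕ × ℕ => ((w.1 + w.2 + 1, 2*w.1 + 1) : ℕ × ℕ))
        = fun w : ℕ × ℕ => (((2*w.1+2 : ℕ) : ℂ) * x^(2*w.1+1)) * (((2*w.2+2 : ℕ) : ℂ) * y^(2*w.2+1)) := by
      funext w
      simp only [Function.comp_apply, hF2, hc]
      rw [if_pos ⟨by omega, by omega⟩]
      have h2 : 2*(w.1+w.2+1) - (2*w.1+1) = 2*w.2+1 := by omega
      have h3 : (2*w.1+1) + 1 = 2*w.1+2 := by omega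
      have h4 : (2*w.2+1) + 1 = 2*w.2+2 := by omega
      rw [h2, h3, h4]
      ring
    rw [hcomp]; exact hP2
  have hF : HasSum (fun w : ℕ × ℕ => if w.2 ≤ 2*w.1 then c w.2 (2*w.1 - w.2) else 0)
      ((((1+x^2)/(1-x^2)^2) * ((1+y^2)/(1-y^2)^2))
        + ((x * (2/(1-x^2)^2)) * (y * (2/(1-y^2)^2)))) := by
    have hadd := hHF1.add hHF2
    have hfun : (fun w : ℕ × ℕ => if w.2 ≤ 2*w.1 then c w.2 (2*w.1 - w.2) else 0)
        = fun w => F1 w + F2 w := by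
      funext w
      rw [hF1, hF2]
      dsimp only
      by_cases h : w.2 ≤ 2*w.1
      · rcases Nat.mod_two_eq_zero_or_one w.2 with h2 | h2 <;> simp [h, h2]
      · simp [h]
    rw [hfun]; exact hadd
  have hfib : ∀ r : ℕ, HasSum (fun a : ℕ => if a ≤ 2*r then c a (2*r - a) else 0)
      (∑ a ∈ Finset.range (2*r+1), if a ≤ 2*r then c a (2*r - a) else 0) := by
    intro r
    apply hasSum_sum_of_ne_finset_zero
    intro a ha
    simp only [Finset.mem_range, not_lt] at ha
    rw [if_neg (by omega)]
  have hG : HasSum (fun r : ℕ => ∑ a ∈ Finset.range (2*r+1), if a ≤ 2*r then c a (2*r - a) else 0)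
      ((((1+x^2)/(1-x^2)^2) * ((1+y^2)/(1-y^2)^2))
        + ((x * (2/(1-x^2)^2)) * (y * (2/(1-y^2)^2)))) :=
    HasSum.prod_fiberwise hF hfib
  -- subtract the r = 0 term
  have hdelta : HasSum (fun r : ℕ => if r = 0 then (1:ℂ) else 0) 1 := hasSum_ite_eq 0 1
  have hL : HasSum (fun r : ℕ =>
      (∑ a ∈ Finset.range (2*r+1), if a ≤ 2*r then c a (2*r - a) else 0)
        - (if r = 0 then (1:ℂ) else 0))
      ((((1+x^2)/(1-x^2)^2) * ((1+y^2)/(1-y^2)^2))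
        + ((x * (2/(1-x^2)^2)) * (y * (2/(1-y^2)^2))) - 1) := hG.sub hdelta
  -- identify with the LHS
  have hcp : ∀ a b : ℕ, (p:ℂ)^(-(a:ℂ)*α - (b:ℂ)*β) = x^a * y^b := by
    intro a b
    rw [show -(a:ℂ)*α - (b:ℂ)*β = (a:ℂ)*(-α) + (b:ℂ)*(-β) by ring,
      Complex.cpow_add _ _ hp0, Complex.cpow_nat_mul, Complex.cpow_nat_mul]
  have hLHS : (fun r : ℕ => if 1 ≤ r then
        ∑ a ∈ Finset.range (2*r + 1),
          ((a + 1 : ℕ) : ℂ) * ((2*r - a + 1 : ℕ) : ℂ) *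
            (p:ℂ)^(-(a:ℂ)*α - ((2*r - a : ℕ) : ℂ)*β)
      else 0)
      = fun r : ℕ =>
      (∑ a ∈ Finset.range (2*r+1), if a ≤ 2*r then c a (2*r - a) else 0)
        - (if r = 0 then (1:ℂ) else 0) := by
    funext r
    by_cases hr : 1 ≤ r
    · rw [if_pos hr, if_neg (by omega), sub_zero]
      refine Finset.sum_congr rfl fun a ha => ?_
      simp only [Finset.mem_range] at ha
      rw [if_pos (by omega), hc, hcp a (2*r - a)]
      ring
    · have hr0 : r = 0 := by omega
      subst hr0
      simp [hc]
  rw [hLHS, hL.tsum_eq]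
  -- final algebra
  have h2a : (p:ℂ)^(-2*α) = x^2 := by
    rw [show (-2*α : ℂ) = ((2:ℕ):ℂ)*(-α) by push_cast; ring, Complex.cpow_nat_mul]
  have h2b : (p:ℂ)^(-2*β) = y^2 := by
    rw [show (-2*β : ℂ) = ((2:ℕ):ℂ)*(-β) by push_cast; ring, Complex.cpow_nat_mul]
  have hab : (p:ℂ)^(-α-β) = x*y := by
    rw [show (-α-β : ℂ) = (-α) + (-β) by ring, Complex.cpow_add _ _ hp0]
  rw [h2a, h2b, hab]
  field_simp
  ring
end

section
/- For a prime p and complex α, β, γ with Re(α), Re(β) > 0 and Re(γ) > 1/2, one has Σ_{b=0}^∞ p^{−2bγ} Σ_{n₁+n₂ = 2b+1, n₁,n₂ ≥ 0} τ(p^{n₁})τ(p^{n₂}) p^{−n₁α − n₂β} · p^{2b+1/2−(n₁+n₂)} = p^{γ−1/2} / ((1 − p^{−2α−2γ})²(1 − p^{−2β−2γ})²) · [2p^{−α−γ}(1 + p^{−2β−2γ}) + 2p^{−β−γ}(1 + p^{−2α−2γ})]. -/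
open Complex

private noncomputable def convT (x y : ℂ) (m : ℕ) : ℂ :=
  ∑ k ∈ Finset.range (m + 1), ((k + 1 : ℕ) : ℂ) * ((m - k + 1 : ℕ) : ℂ) * x ^ k * y ^ (m - k)

private lemma one_sub_ne_zero_of_norm_lt_one {z : ℂ} (h : ‖z‖ < 1) : 1 - z ≠ 0 := by
  intro h0
  rw [sub_eq_zero] at h0
  rw [← h0] at h
  simp at h

private lemma summable_norm_succ_geom {x : ℂ} (hx : ‖x‖ < 1) :
    Summable fun n : ℕ => ‖((n : ℂ) + 1) * x ^ n‖ := by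
  have h1 : Summable fun n : ℕ => (n : ℝ) ^ 1 * ‖x‖ ^ n :=
    summable_pow_mul_geometric_of_norm_lt_one 1 (by rwa [norm_norm])
  have h2 : Summable fun n : ℕ => ‖x‖ ^ n := summable_geometric_of_lt_one (norm_nonneg x) hx
  refine ((h1.add h2).congr fun n => ?_)
  rw [norm_mul, norm_pow]
  have : ((n : ℂ) + 1) = ((n + 1 : ℕ) : ℂ) := by push_cast; ring
  rw [this, Complex.norm_natCast]
  push_cast
  ring

private lemma tsum_succ_geom {x : ℂ} (hx : ‖x‖ < 1) :
    ∑' n : ℕ, ((n : ℂ) + 1) * x ^ n = 1 / (1 - x) ^ 2 := by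
  have h1 : Summable fun n : ℕ => (n : ℂ) * x ^ n :=
    ((summable_pow_mul_geometric_of_norm_lt_one 1 hx).congr fun n => by rw [pow_one])
  have h2 : Summable fun n : ℕ => x ^ n := summable_geometric_of_norm_lt_one hx
  have hne : (1 : ℂ) - x ≠ 0 := one_sub_ne_zero_of_norm_lt_one hx
  calc ∑' n : ℕ, ((n : ℂ) + 1) * x ^ n
      = ∑' n : ℕ, ((n : ℂ) * x ^ n + x ^ n) := by
        apply tsum_congr; intro n; ring
    _ = x / (1 - x) ^ 2 + (1 - x)⁻¹ := by
        rw [Summable.tsum_add h1 h2, tsum_coe_mul_geometric_of_norm_lt_one hx,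
          tsum_geometric_of_norm_lt_one hx]
    _ = 1 / (1 - x) ^ 2 := by field_simp; ring

private lemma convT_eq (x y : ℂ) (m : ℕ) :
    convT x y m = ∑ k ∈ Finset.range (m + 1),
      (((k : ℂ) + 1) * x ^ k) * (((m - k : ℕ) : ℂ) + 1) * y ^ (m - k) := by
  unfold convT
  refine Finset.sum_congr rfl fun k _ => ?_
  push_cast
  ring

private lemma summable_convT {x y : ℂ} (hx : ‖x‖ < 1) (hy : ‖y‖ < 1) :
    Summable (convT x y) := by
  have h := (summable_norm_sum_mul_range_of_summable_norm
    (summable_norm_succ_geom hx) (summable_norm_succ_geom hy)).of_norm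
  refine h.congr fun m => ?_
  rw [convT_eq]
  refine Finset.sum_congr rfl fun k _ => ?_
  ring

private lemma tsum_convT {x y : ℂ} (hx : ‖x‖ < 1) (hy : ‖y‖ < 1) :
    ∑' m : ℕ, convT x y m = 1 / ((1 - x) ^ 2 * (1 - y) ^ 2) := by
  have h := tsum_mul_tsum_eq_tsum_sum_range_of_summable_norm
    (summable_norm_succ_geom hx) (summable_norm_succ_geom hy)
  rw [tsum_succ_geom hx, tsum_succ_geom hy] at h
  rw [show (∑' m : ℕ, convT x y m) = ∑' n : ℕ, ∑ k ∈ Finset.range (n + 1),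
      (((k : ℂ) + 1) * x ^ k) * ((((n - k : ℕ) : ℂ) + 1) * y ^ (n - k)) from
    tsum_congr fun m => by rw [convT_eq]; exact Finset.sum_congr rfl fun k _ => by ring]
  rw [← h]
  rw [div_mul_div_comm, one_mul]

private lemma convT_neg (x y : ℂ) (m : ℕ) :
    convT (-x) (-y) m = (-1) ^ m * convT x y m := by
  unfold convT
  rw [Finset.mul_sum]
  refine Finset.sum_congr rfl fun k hk => ?_
  rw [Finset.mem_range] at hk
  have hk' : k ≤ m := by omega
  have h1 : (-x) ^ k = (-1) ^ k * x ^ k := by rw [neg_pow]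
  have h2 : (-y) ^ (m - k) = (-1) ^ (m - k) * y ^ (m - k) := by rw [neg_pow]
  have h3 : (-1 : ℂ) ^ k * (-1 : ℂ) ^ (m - k) = (-1) ^ m := by
    rw [← pow_add, Nat.add_sub_cancel' hk']
  rw [h1, h2, ← h3]
  ring

private lemma tsum_convT_odd {x y : ℂ} (hx : ‖x‖ < 1) (hy : ‖y‖ < 1) :
    ∑' b : ℕ, convT x y (2 * b + 1)
      = (1 / ((1 - x) ^ 2 * (1 - y) ^ 2) - 1 / ((1 + x) ^ 2 * (1 + y) ^ 2)) / 2 := by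
  have hx' : ‖-x‖ < 1 := by rwa [norm_neg]
  have hy' : ‖-y‖ < 1 := by rwa [norm_neg]
  have ht : Summable (convT x y) := summable_convT hx hy
  have ht' : Summable (convT (-x) (-y)) := summable_convT hx' hy'
  set s : ℕ → ℂ := fun m => (convT x y m - convT (-x) (-y) m) / 2 with hs_def
  have hs : Summable s := (ht.sub ht').div_const 2
  have heven : ∀ b : ℕ, s (2 * b) = 0 := by
    intro b
    simp only [hs_def, convT_neg, pow_mul, neg_one_sq, one_pow, one_mul, sub_self, zero_div]
  have hodd : ∀ b : ℕ, s (2 * b + 1) = convT x y (2 * b + 1) := by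
    intro b
    simp only [hs_def, convT_neg, pow_succ, pow_mul, neg_one_sq, one_pow, one_mul]
    ring
  have hinj : Function.Injective (fun b : ℕ => 2 * b + 1) := fun a b h => by simp only at h; omega
  have hso : Summable fun b : ℕ => s (2 * b + 1) := hs.comp_injective hinj
  have hse : Summable fun b : ℕ => s (2 * b) := by
    exact summable_zero.congr fun b => (heven b).symm
  have h1 := tsum_even_add_odd hse hso
  have h2 : (∑' b : ℕ, s (2 * b)) = 0 := by
    rw [tsum_congr heven]; exact tsum_zero
  have h3 : (∑' b : ℕ, s (2 * b + 1)) = ∑' b : ℕ, convT x y (2 * b + 1) :=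
    tsum_congr hodd
  have h4 : (∑' m : ℕ, s m)
      = (1 / ((1 - x) ^ 2 * (1 - y) ^ 2) - 1 / ((1 + x) ^ 2 * (1 + y) ^ 2)) / 2 := by
    simp only [hs_def]
    rw [tsum_div_const, Summable.tsum_sub ht ht', tsum_convT hx hy, tsum_convT hx' hy']
    rw [sub_neg_eq_add, sub_neg_eq_add]
  rw [h2, zero_add, h3] at h1
  rw [h1, h4]

/-- For a prime `p`, `Re α, Re β > 0`, `Re γ > 1/2`:
`Σ_{b≥0} p^{−2bγ} Σ_{n₁+n₂=2b+1} τ(p^{n₁})τ(p^{n₂}) p^{−n₁α−n₂β} p^{2b+1/2−(n₁+n₂)}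
  = p^{γ−1/2}/((1 − p^{−2α−2γ})²(1 − p^{−2β−2γ})²)
      · (2p^{−α−γ}(1 + p^{−2β−2γ}) + 2p^{−β−γ}(1 + p^{−2α−2γ}))`. -/
theorem odd_power_gauss_sum_series (p : ℕ) (hp : p.Prime)
    (α β γ : ℂ) (hα : 0 < α.re) (hβ : 0 < β.re) (hγ : 1/2 < γ.re) :
    (∑' b : ℕ, (p:ℂ)^(-2*(b:ℂ)*γ) *
      ∑ n1 ∈ Finset.range (2*b + 2),
        ((n1 + 1 : ℕ) : ℂ) * ((2*b + 1 - n1 + 1 : ℕ) : ℂ) *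
          (p:ℂ)^(-(n1:ℂ)*α - ((2*b + 1 - n1 : ℕ) : ℂ)*β) *
          (p:ℂ)^(((2*b : ℕ) : ℂ) + 1/2 - ((2*b + 1 : ℕ) : ℂ)))
    = (p:ℂ)^(γ - 1/2) / ((1 - (p:ℂ)^(-2*α-2*γ))^2 * (1 - (p:ℂ)^(-2*β-2*γ))^2) *
        (2*(p:ℂ)^(-α-γ) * (1 + (p:ℂ)^(-2*β-2*γ))
          + 2*(p:ℂ)^(-β-γ) * (1 + (p:ℂ)^(-2*α-2*γ))) := by
  have hp0 : (p : ℂ) ≠ 0 := Nat.cast_ne_zero.2 hp.pos.ne'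
  have hp1 : (1 : ℝ) < (p : ℝ) := by exact_mod_cast hp.one_lt
  have hnorm : ∀ z : ℂ, z.re < 0 → ‖(p : ℂ) ^ z‖ < 1 := by
    intro z hz
    rw [norm_natCast_cpow_of_pos hp.pos]
    exact Real.rpow_lt_one_of_one_lt_of_neg hp1 hz
  have hu : ‖(p : ℂ) ^ (-α - γ)‖ < 1 := by
    apply hnorm
    simp only [sub_re, neg_re]
    linarith
  have hv : ‖(p : ℂ) ^ (-β - γ)‖ < 1 := by
    apply hnorm
    simp only [sub_re, neg_re]
    linarith
  set u : ℂ := (p : ℂ) ^ (-α - γ) with hu_def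
  set v : ℂ := (p : ℂ) ^ (-β - γ) with hv_def
  have merge : ∀ c a e f : ℂ, (p : ℂ) ^ a * (c * (p : ℂ) ^ e * (p : ℂ) ^ f)
      = c * (p : ℂ) ^ (a + e + f) := by
    intro c a e f
    rw [cpow_add _ _ hp0, cpow_add _ _ hp0]
    ring
  have hterm : ∀ b : ℕ, (p:ℂ)^(-2*(b:ℂ)*γ) *
      ∑ n1 ∈ Finset.range (2*b + 2),
        ((n1 + 1 : ℕ) : ℂ) * ((2*b + 1 - n1 + 1 : ℕ) : ℂ) *
          (p:ℂ)^(-(n1:ℂ)*α - ((2*b + 1 - n1 : ℕ) : ℂ)*β) *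
          (p:ℂ)^(((2*b : ℕ) : ℂ) + 1/2 - ((2*b + 1 : ℕ) : ℂ))
      = (p:ℂ)^(γ - 1/2) * convT u v (2*b + 1) := by
    intro b
    unfold convT
    rw [show 2*b + 1 + 1 = 2*b + 2 from rfl]
    rw [Finset.mul_sum, Finset.mul_sum]
    refine Finset.sum_congr rfl fun k hk => ?_
    rw [Finset.mem_range] at hk
    have hk' : k ≤ 2*b + 1 := by omega
    rw [hu_def, hv_def, ← cpow_nat_mul, ← cpow_nat_mul, merge, merge]
    congr 1
    congr 1
    push_cast [Nat.cast_sub hk']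
    ring
  rw [tsum_congr hterm, tsum_mul_left, tsum_convT_odd hu hv]
  have hu2 : (p : ℂ) ^ (-2*α - 2*γ) = u ^ 2 := by
    rw [hu_def, show (-2*α - 2*γ : ℂ) = (-α - γ) + (-α - γ) by ring, cpow_add _ _ hp0, sq]
  have hv2 : (p : ℂ) ^ (-2*β - 2*γ) = v ^ 2 := by
    rw [hv_def, show (-2*β - 2*γ : ℂ) = (-β - γ) + (-β - γ) by ring, cpow_add _ _ hp0, sq]
  rw [hu2, hv2]
  have h1u : (1 : ℂ) - u ≠ 0 := one_sub_ne_zero_of_norm_lt_one hu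
  have h2u : (1 : ℂ) + u ≠ 0 := by
    have := one_sub_ne_zero_of_norm_lt_one (z := -u) (by rwa [norm_neg])
    rwa [sub_neg_eq_add] at this
  have h1v : (1 : ℂ) - v ≠ 0 := one_sub_ne_zero_of_norm_lt_one hv
  have h2v : (1 : ℂ) + v ≠ 0 := by
    have := one_sub_ne_zero_of_norm_lt_one (z := -v) (by rwa [norm_neg])
    rwa [sub_neg_eq_add] at this
  have hu2' : (1 : ℂ) - u ^ 2 ≠ 0 := by
    rw [show (1 : ℂ) - u ^ 2 = (1 - u) * (1 + u) by ring]
    exact mul_ne_zero h1u h2u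
  have hv2' : (1 : ℂ) - v ^ 2 ≠ 0 := by
    rw [show (1 : ℂ) - v ^ 2 = (1 - v) * (1 + v) by ring]
    exact mul_ne_zero h1v h2v
  have hD1 : ((1-u)^2*(1-v)^2 : ℂ) ≠ 0 :=
    mul_ne_zero (pow_ne_zero 2 h1u) (pow_ne_zero 2 h1v)
  have hD2 : ((1+u)^2*(1+v)^2 : ℂ) ≠ 0 :=
    mul_ne_zero (pow_ne_zero 2 h2u) (pow_ne_zero 2 h2v)
  have hD : ((1-u^2)^2*(1-v^2)^2 : ℂ) ≠ 0 :=
    mul_ne_zero (pow_ne_zero 2 hu2') (pow_ne_zero 2 hv2')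
  have key : (1/((1-u)^2*(1-v)^2) - 1/((1+u)^2*(1+v)^2))/2
      = (2*u*(1+v^2) + 2*v*(1+u^2)) / ((1-u^2)^2*(1-v^2)^2) := by
    rw [div_sub_div _ _ hD1 hD2, one_mul, mul_one, div_div,
      div_eq_div_iff (mul_ne_zero (mul_ne_zero hD1 hD2) two_ne_zero) hD]
    ring
  rw [key]
  ring
end

section
/- For a prime p and complex α, β, γ with Re(α), Re(β) > 0, Re(γ) > 1/2, Σ_{b=0}^∞ p^{−2bγ} Σ_{n₁,n₂≥0, n₁+n₂≤2b, n₁+n₂ even} τ(p^{n₁})τ(p^{n₂}) p^{−n₁α−n₂β} φ(p^{n₁+n₂})/p^{n₁+n₂} = (1 − p^{−2γ})^{−1} · [1/p + (1 − 1/p) · ((1 + p^{−2α−2γ})(1 + p^{−2β−2γ}) + 4p^{−α−β−2γ}) / ((1 − p^{−2α−2γ})²(1 − p^{−2β−2γ})²)]. -/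
open Complex
set_option maxHeartbeats 1000000

-- geometric tail
lemma tail_geom {q : ℂ} (hq : ‖q‖ < 1) (m : ℕ) :
    ∑' b : ℕ, (if m ≤ b then q^b else 0) = q^m * (1-q)⁻¹ := by
  have hinj : Function.Injective (fun b : ℕ => b + m) := add_left_injective m
  have hsupp : Function.support (fun b : ℕ => if m ≤ b then q^b else 0) ⊆
      Set.range (fun b : ℕ => b + m) := by
    intro b hb
    rcases le_or_gt m b with h | h
    · exact ⟨b - m, by simp; omega⟩
    · simp [Function.mem_support, if_neg (by omega : ¬ m ≤ b)] at hb
  rw [← hinj.tsum_eq hsupp]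
  have : ∀ b : ℕ, (if m ≤ b + m then q^(b+m) else 0) = q^b * q^m := by
    intro b; rw [if_pos (by omega), pow_add]
  rw [tsum_congr this, tsum_mul_right, tsum_geometric_of_norm_lt_one hq, mul_comm]

-- real linear-times-geometric summable
lemma summable_lin_real (a b : ℝ) {r : ℝ} (h0 : 0 ≤ r) (h1 : r < 1) :
    Summable (fun n : ℕ => (a*(n:ℝ)+b)*r^n) := by
  have hr : ‖r‖ < 1 := by rwa [Real.norm_eq_abs, _root_.abs_of_nonneg h0]
  have h2 := summable_pow_mul_geometric_of_norm_lt_one (R := ℝ) 1 hr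
  have h3 := summable_geometric_of_norm_lt_one hr
  exact (((h2.mul_left a).add (h3.mul_left b)).congr (fun n => by push_cast; ring))

lemma summable_lin {t : ℂ} (ht : ‖t‖ < 1) (a b : ℂ) :
    Summable (fun j : ℕ => (a*(j:ℂ)+b)*t^j) := by
  have h2 := summable_pow_mul_geometric_of_norm_lt_one (R := ℂ) 1 ht
  have h3 := summable_geometric_of_norm_lt_one ht
  exact (((h2.mul_left a).add (h3.mul_left b)).congr (fun n => by push_cast; ring))

lemma summable_norm_lin {t : ℂ} (ht : ‖t‖ < 1) (a b : ℂ) :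
    Summable (fun j : ℕ => ‖(a*(j:ℂ)+b)*t^j‖) := by
  apply Summable.of_nonneg_of_le (fun j => norm_nonneg _) (fun j => ?_)
    (summable_lin_real ‖a‖ ‖b‖ (norm_nonneg t) ht)
  rw [norm_mul, norm_pow]
  gcongr
  calc ‖a*(j:ℂ)+b‖ ≤ ‖a*(j:ℂ)‖ + ‖b‖ := norm_add_le _ _
    _ = ‖a‖*(j:ℝ)+‖b‖ := by rw [norm_mul, Complex.norm_natCast]

lemma tsum_lin {t : ℂ} (ht : ‖t‖ < 1) (a b : ℂ) :
    ∑' j : ℕ, (a*(j:ℂ)+b)*t^j = a*(t/(1-t)^2) + b*(1-t)⁻¹ := by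
  have h2 : Summable (fun j : ℕ => (j:ℂ)*t^j) :=
    (summable_pow_mul_geometric_of_norm_lt_one (R := ℂ) 1 ht).congr (fun n => by push_cast; ring)
  have h3 := summable_geometric_of_norm_lt_one ht
  have e : ∀ j : ℕ, (a*(j:ℂ)+b)*t^j = a*((j:ℂ)*t^j) + b*t^j := fun j => by ring
  rw [tsum_congr e, Summable.tsum_add (h2.mul_left a) (h3.mul_left b), tsum_mul_left, tsum_mul_left,
    tsum_coe_mul_geometric_of_norm_lt_one ht, tsum_geometric_of_norm_lt_one ht]


lemma abstract_key {x y q c : ℂ} (hx : ‖x‖ < 1) (hy : ‖y‖ < 1) (hq : ‖q‖ < 1) :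
    (∑' b : ℕ, q^b *
      ∑ n1 ∈ Finset.range (2*b + 1), ∑ n2 ∈ Finset.range (2*b + 1),
        (if n1 + n2 ≤ 2*b ∧ Even (n1 + n2) then
          ((n1 + 1 : ℕ) : ℂ) * ((n2 + 1 : ℕ) : ℂ) * (x^n1 * y^n2) *
            (if n1 + n2 = 0 then 1 else 1 - c)
        else 0))
    = (1 - q)⁻¹ *
        (c + (1-c) * ((1 + x^2*q) * (1 + y^2*q) + 4*(x*y*q)) /
          ((1 - x^2*q)^2 * (1 - y^2*q)^2)) := by
  -- notation
  set w : ℕ → ℂ := fun n => if n = 0 then 1 else 1 - c with hw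
  set g : ℕ × ℕ → ℂ := fun n =>
    ((n.1 + 1 : ℕ) : ℂ) * ((n.2 + 1 : ℕ) : ℂ) * (x^n.1 * y^n.2) with hg
  set F : ℕ → ℕ × ℕ → ℂ := fun b n =>
    q^b * (if n.1 + n.2 ≤ 2*b ∧ Even (n.1 + n.2) then g n * w (n.1 + n.2) else 0) with hF
  set h : ℕ × ℕ → ℂ := fun n =>
    if Even (n.1 + n.2) then g n * q^((n.1 + n.2)/2) else 0 with hh
  set T : ℕ × ℕ → ℂ := fun n =>
    if Even (n.1 + n.2) then g n * w (n.1 + n.2) * q^((n.1 + n.2)/2) else 0 with hT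
  have hx0 : (0:ℝ) ≤ ‖x‖ := norm_nonneg x
  have hy0 : (0:ℝ) ≤ ‖y‖ := norm_nonneg y
  have hq0 : (0:ℝ) ≤ ‖q‖ := norm_nonneg q
  set C : ℝ := max 1 ‖1 - c‖ with hC
  have hC0 : (0:ℝ) ≤ C := le_trans zero_le_one (le_max_left _ _)
  have hwC : ∀ n, ‖w n‖ ≤ C := by
    intro n; simp only [hw]
    split_ifs
    · rw [norm_one]; exact le_max_left _ _
    · exact le_max_right _ _
  -- majorants
  have hsx : Summable (fun n : ℕ => ((n:ℝ)+1)*‖x‖^n) := by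
    simpa using summable_lin_real 1 1 hx0 hx
  have hsy : Summable (fun n : ℕ => (((n:ℝ)+1)*‖y‖^n)*C) := by
    simpa using (summable_lin_real 1 1 hy0 hy).mul_right C
  have hinner : Summable (fun n : ℕ × ℕ => (((n.1:ℝ)+1)*‖x‖^n.1) * ((((n.2:ℝ)+1)*‖y‖^n.2)*C)) :=
    hsx.mul_of_nonneg hsy (fun n => by positivity) (fun n => by positivity)
  have hgeoq : Summable (fun b : ℕ => ‖q‖^b) :=
    summable_geometric_of_norm_lt_one (by rwa [Real.norm_eq_abs, _root_.abs_of_nonneg hq0])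
  have hM : Summable (fun z : ℕ × (ℕ × ℕ) =>
      ‖q‖^z.1 * ((((z.2.1:ℝ)+1)*‖x‖^z.2.1) * ((((z.2.2:ℝ)+1)*‖y‖^z.2.2)*C))) :=
    hgeoq.mul_of_nonneg hinner (fun n => by positivity) (fun n => by positivity)
  have hgnorm : ∀ n : ℕ × ℕ, ‖g n‖ = ((n.1:ℝ)+1)*‖x‖^n.1 * (((n.2:ℝ)+1)*‖y‖^n.2) := by
    intro n
    simp only [hg, norm_mul, norm_pow, Complex.norm_natCast]
    push_cast; ring
  -- summability of the big family
  have hFsum : Summable (Function.uncurry F) := by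
    apply Summable.of_norm_bounded hM
    rintro ⟨b, n⟩
    simp only [Function.uncurry, hF, norm_mul, norm_pow]
    rw [← mul_assoc (((n.1:ℝ)+1)*‖x‖^n.1)]
    gcongr
    split_ifs with hcond
    · rw [norm_mul]
      calc ‖g n‖ * ‖w (n.1+n.2)‖ ≤ (((n.1:ℝ)+1)*‖x‖^n.1 * (((n.2:ℝ)+1)*‖y‖^n.2)) * C := by
            rw [hgnorm n]; gcongr; exact hwC _
        _ = _ := by ring
    · simp; positivity

  -- step 1: rewrite LHS as iterated tsum of F
  have e0 : ∀ b : ℕ, (q^b *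
      ∑ n1 ∈ Finset.range (2*b + 1), ∑ n2 ∈ Finset.range (2*b + 1),
        (if n1 + n2 ≤ 2*b ∧ Even (n1 + n2) then
          ((n1 + 1 : ℕ) : ℂ) * ((n2 + 1 : ℕ) : ℂ) * (x^n1 * y^n2) *
            (if n1 + n2 = 0 then 1 else 1 - c)
        else 0)) = ∑' n : ℕ × ℕ, F b n := by
    intro b
    have e1 : ∑' n : ℕ × ℕ, F b n = q^b * ∑' n : ℕ × ℕ,
        (if n.1 + n.2 ≤ 2*b ∧ Even (n.1 + n.2) then g n * w (n.1 + n.2) else 0) := by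
      simp only [hF]; exact tsum_mul_left
    rw [e1]
    congr 1
    rw [tsum_eq_sum (s := Finset.range (2*b+1) ×ˢ Finset.range (2*b+1)) ?_]
    · rw [Finset.sum_product]
    · rintro ⟨n1, n2⟩ hn
      rw [if_neg]
      rintro ⟨hle, -⟩
      exact hn (by simp [Finset.mem_product]; omega)
  -- step 2: Fubini
  have e2 : ∑' b : ℕ, ∑' n : ℕ × ℕ, F b n = ∑' n : ℕ × ℕ, ∑' b : ℕ, F b n :=
    (Summable.tsum_comm' hFsum hFsum.prod_factor hFsum.prod_symm.prod_factor).symm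
  -- step 3: inner geometric sum
  have e3 : ∀ n : ℕ × ℕ, ∑' b : ℕ, F b n = T n * (1-q)⁻¹ := by
    intro n
    by_cases he : Even (n.1 + n.2)
    · obtain ⟨m, hm⟩ := he
      have e1 : ∀ b, F b n = (if m ≤ b then q^b else 0) * (g n * w (n.1 + n.2)) := by
        intro b
        simp only [hF]
        by_cases hb : m ≤ b
        · rw [if_pos ⟨by omega, ⟨m, hm⟩⟩, if_pos hb]
        · have hc : ¬(n.1 + n.2 ≤ 2*b ∧ Even (n.1 + n.2)) := by rintro ⟨h1, -⟩; omega
          rw [if_neg hc, if_neg hb, mul_zero, zero_mul]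
      have hm2 : (n.1 + n.2)/2 = m := by omega
      rw [tsum_congr e1, tsum_mul_right, tail_geom hq m, hT]
      simp only
      rw [if_pos ⟨m, hm⟩, hm2]
      ring
    · have e1 : ∀ b, F b n = 0 := by intro b; simp [hF, he]
      rw [tsum_congr e1, tsum_zero, hT]
      simp only
      rw [if_neg he, zero_mul]
  -- summability of h
  have hsy0 : Summable (fun n : ℕ => ((n:ℝ)+1)*‖y‖^n) := by
    simpa using summable_lin_real 1 1 hy0 hy
  have hinner0 : Summable (fun n : ℕ × ℕ => (((n.1:ℝ)+1)*‖x‖^n.1) * (((n.2:ℝ)+1)*‖y‖^n.2)) :=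
    hsx.mul_of_nonneg hsy0 (fun n => by positivity) (fun n => by positivity)
  have hhsum : Summable h := by
    apply Summable.of_norm_bounded hinner0
    intro n
    simp only [hh]
    split_ifs
    · rw [norm_mul, norm_pow]
      calc ‖g n‖ * ‖q‖^((n.1+n.2)/2) ≤ ‖g n‖ * 1 := by
            gcongr
            exact pow_le_one₀ hq0 hq.le
        _ = _ := by rw [mul_one, hgnorm n]
    · simp; positivity
  -- delta function
  have hdsum : Summable (fun n : ℕ × ℕ => if n = ((0,0) : ℕ × ℕ) then c else 0) := by
    apply summable_of_ne_finset_zero (s := {((0,0) : ℕ × ℕ)})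
    intro n hn
    exact if_neg (by simpa using hn)
  -- step 4: split T
  have e4 : ∀ n : ℕ × ℕ, T n = (1-c) * h n + (if n = ((0,0) : ℕ × ℕ) then c else 0) := by
    intro n
    by_cases he : Even (n.1 + n.2)
    · by_cases h0 : n = ((0,0) : ℕ × ℕ)
      · subst h0
        simp [hT, hh, hg, hw]
      · have hne : n.1 + n.2 ≠ 0 := by
          intro hc
          exact h0 (Prod.ext (by omega) (by omega))
        simp only [hT, hh, hw]
        rw [if_pos he, if_pos he, if_neg hne, if_neg h0]
        ring
    · have h0 : n ≠ ((0,0) : ℕ × ℕ) := by rintro rfl; exact he (by simp)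
      simp only [hT, hh]
      rw [if_neg he, if_neg he, if_neg h0]
      ring
  have e5 : ∑' n : ℕ × ℕ, T n = (1-c) * (∑' n : ℕ × ℕ, h n) + c := by
    rw [tsum_congr e4, Summable.tsum_add (hhsum.mul_left _) hdsum, tsum_mul_left, tsum_ite_eq]

  -- norms of x^2*q, y^2*q
  have hsX : ‖x^2*q‖ < 1 := by
    rw [norm_mul, norm_pow]
    exact lt_of_le_of_lt (mul_le_of_le_one_left hq0 (pow_le_one₀ hx0 hx.le)) hq
  have hsY : ‖y^2*q‖ < 1 := by
    rw [norm_mul, norm_pow]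
    exact lt_of_le_of_lt (mul_le_of_le_one_left hq0 (pow_le_one₀ hy0 hy.le)) hq
  -- even and odd parts of h
  set hE : ℕ × ℕ → ℂ := fun n =>
    if n.1 % 2 = 0 ∧ n.2 % 2 = 0 then g n * q^((n.1 + n.2)/2) else 0 with hhE
  set hO : ℕ × ℕ → ℂ := fun n =>
    if n.1 % 2 = 1 ∧ n.2 % 2 = 1 then g n * q^((n.1 + n.2)/2) else 0 with hhO
  have hbound : ∀ (P : Prop) [Decidable P] (n : ℕ × ℕ),
      ‖if P then g n * q^((n.1 + n.2)/2) else 0‖ ≤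
        (((n.1:ℝ)+1)*‖x‖^n.1) * (((n.2:ℝ)+1)*‖y‖^n.2) := by
    intro P _ n
    split_ifs
    · rw [norm_mul, norm_pow]
      calc ‖g n‖ * ‖q‖^((n.1+n.2)/2) ≤ ‖g n‖ * 1 := by
            gcongr
            exact pow_le_one₀ hq0 hq.le
        _ = _ := by rw [mul_one, hgnorm n]
    · simp; positivity
  have hEsum : Summable hE := Summable.of_norm_bounded hinner0 (fun n => hbound _ n)
  have hOsum : Summable hO := Summable.of_norm_bounded hinner0 (fun n => hbound _ n)
  have esplit : ∀ n : ℕ × ℕ, h n = hE n + hO n := by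
    intro n
    simp only [hh, hhE, hhO, Nat.even_iff]
    split_ifs <;> first | ring1 | (exfalso; omega)
  -- even part as a product
  have hf1 : Summable (fun j : ℕ => ‖(2*(j:ℂ)+1)*(x^2*q)^j‖) := summable_norm_lin hsX 2 1
  have hg1 : Summable (fun k : ℕ => ‖(2*(k:ℂ)+1)*(y^2*q)^k‖) := summable_norm_lin hsY 2 1
  have hf2 : Summable (fun j : ℕ => ‖(2*(j:ℂ)+2)*(x^2*q)^j‖) := summable_norm_lin hsX 2 2
  have hg2 : Summable (fun k : ℕ => ‖(2*(k:ℂ)+2)*(y^2*q)^k‖) := summable_norm_lin hsY 2 2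
  have eE : ∑' n : ℕ × ℕ, hE n =
      (∑' j : ℕ, (2*(j:ℂ)+1)*(x^2*q)^j) * (∑' k : ℕ, (2*(k:ℂ)+1)*(y^2*q)^k) := by
    have hinj : Function.Injective (fun z : ℕ × ℕ => ((2*z.1, 2*z.2) : ℕ × ℕ)) := by
      rintro ⟨a1, a2⟩ ⟨b1, b2⟩ hab
      simp only [Prod.mk.injEq] at hab
      exact Prod.ext (by omega) (by omega)
    have hsupp : Function.support hE ⊆ Set.range (fun z : ℕ × ℕ => ((2*z.1, 2*z.2) : ℕ × ℕ)) := by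
      intro n hn
      simp only [Function.mem_support, hhE] at hn
      by_cases hc : n.1 % 2 = 0 ∧ n.2 % 2 = 0
      · exact ⟨(n.1/2, n.2/2), Prod.ext (by simp; omega) (by simp; omega)⟩
      · exact absurd (if_neg hc) hn
    rw [← hinj.tsum_eq hsupp, tsum_mul_tsum_of_summable_norm hf1 hg1]
    apply tsum_congr
    rintro ⟨j, k⟩
    simp only [hhE, hg]
    rw [if_pos ⟨by omega, by omega⟩, (by omega : (2*j + 2*k)/2 = j + k)]
    push_cast
    ring
  have eO : ∑' n : ℕ × ℕ, hO n =
      x*y*q * ((∑' j : ℕ, (2*(j:ℂ)+2)*(x^2*q)^j) * (∑' k : ℕ, (2*(k:ℂ)+2)*(y^2*q)^k)) := by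
    have hinj : Function.Injective (fun z : ℕ × ℕ => ((2*z.1+1, 2*z.2+1) : ℕ × ℕ)) := by
      rintro ⟨a1, a2⟩ ⟨b1, b2⟩ hab
      simp only [Prod.mk.injEq] at hab
      exact Prod.ext (by omega) (by omega)
    have hsupp : Function.support hO ⊆
        Set.range (fun z : ℕ × ℕ => ((2*z.1+1, 2*z.2+1) : ℕ × ℕ)) := by
      intro n hn
      simp only [Function.mem_support, hhO] at hn
      by_cases hc : n.1 % 2 = 1 ∧ n.2 % 2 = 1
      · exact ⟨(n.1/2, n.2/2), Prod.ext (by simp; omega) (by simp; omega)⟩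
      · exact absurd (if_neg hc) hn
    rw [← hinj.tsum_eq hsupp, tsum_mul_tsum_of_summable_norm hf2 hg2, ← tsum_mul_left]
    apply tsum_congr
    rintro ⟨j, k⟩
    simp only [hhO, hg]
    rw [if_pos ⟨by omega, by omega⟩, (by omega : (2*j+1 + (2*k+1))/2 = j + k + 1)]
    push_cast
    ring
  -- put everything together
  have ehsum : ∑' n : ℕ × ℕ, h n =
      (2*((x^2*q)/(1-x^2*q)^2) + 1*(1-x^2*q)⁻¹) * (2*((y^2*q)/(1-y^2*q)^2) + 1*(1-y^2*q)⁻¹)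
      + x*y*q * ((2*((x^2*q)/(1-x^2*q)^2) + 2*(1-x^2*q)⁻¹) *
          (2*((y^2*q)/(1-y^2*q)^2) + 2*(1-y^2*q)⁻¹)) := by
    rw [tsum_congr esplit, Summable.tsum_add hEsum hOsum, eE, eO,
      tsum_lin hsX 2 1, tsum_lin hsY 2 1, tsum_lin hsX 2 2, tsum_lin hsY 2 2]
  have hX1 : (1 : ℂ) - x^2*q ≠ 0 := by
    intro hc
    have : x^2*q = 1 := by linear_combination -hc
    rw [this] at hsX
    simp at hsX
  have hY1 : (1 : ℂ) - y^2*q ≠ 0 := by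
    intro hc
    have : y^2*q = 1 := by linear_combination -hc
    rw [this] at hsY
    simp at hsY
  calc (∑' b : ℕ, q^b *
      ∑ n1 ∈ Finset.range (2*b + 1), ∑ n2 ∈ Finset.range (2*b + 1),
        (if n1 + n2 ≤ 2*b ∧ Even (n1 + n2) then
          ((n1 + 1 : ℕ) : ℂ) * ((n2 + 1 : ℕ) : ℂ) * (x^n1 * y^n2) *
            (if n1 + n2 = 0 then 1 else 1 - c)
        else 0))
      = ∑' b : ℕ, ∑' n : ℕ × ℕ, F b n := tsum_congr e0
    _ = ∑' n : ℕ × ℕ, ∑' b : ℕ, F b n := e2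
    _ = ∑' n : ℕ × ℕ, T n * (1-q)⁻¹ := tsum_congr e3
    _ = (∑' n : ℕ × ℕ, T n) * (1-q)⁻¹ := tsum_mul_right
    _ = ((1-c) * (∑' n : ℕ × ℕ, h n) + c) * (1-q)⁻¹ := by rw [e5]
    _ = _ := by
        rw [ehsum]
        rw [mul_comm]
        congr 1
        field_simp
        ring


/-- For a prime `p`, `Re α, Re β > 0`, `Re γ > 1/2`:
`Σ_{b≥0} p^{−2bγ} Σ_{n₁,n₂≥0, n₁+n₂≤2b even} τ(p^{n₁})τ(p^{n₂}) p^{−n₁α−n₂β} φ(p^{n₁+n₂})/p^{n₁+n₂}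
  = (1 − p^{−2γ})⁻¹ [1/p + (1 − 1/p)((1 + p^{−2α−2γ})(1 + p^{−2β−2γ}) + 4p^{−α−β−2γ})
      / ((1 − p^{−2α−2γ})²(1 − p^{−2β−2γ})²)]`. -/
theorem even_power_gauss_sum_series (p : ℕ) (hp : p.Prime)
    (α β γ : ℂ) (hα : 0 < α.re) (hβ : 0 < β.re) (hγ : 1/2 < γ.re) :
    (∑' b : ℕ, (p:ℂ)^(-2*(b:ℂ)*γ) *
      ∑ n1 ∈ Finset.range (2*b + 1), ∑ n2 ∈ Finset.range (2*b + 1),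
        (if n1 + n2 ≤ 2*b ∧ Even (n1 + n2) then
          ((n1 + 1 : ℕ) : ℂ) * ((n2 + 1 : ℕ) : ℂ) * (p:ℂ)^(-(n1:ℂ)*α - (n2:ℂ)*β) *
            (((p^(n1+n2)).totient : ℂ) / ((p:ℂ)^((n1+n2 : ℕ) : ℂ)))
        else 0))
    = (1 - (p:ℂ)^(-2*γ))⁻¹ *
        (1/(p:ℂ) + (1 - 1/(p:ℂ)) *
          ((1 + (p:ℂ)^(-2*α-2*γ)) * (1 + (p:ℂ)^(-2*β-2*γ)) + 4*(p:ℂ)^(-α-β-2*γ)) /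
            ((1 - (p:ℂ)^(-2*α-2*γ))^2 * (1 - (p:ℂ)^(-2*β-2*γ))^2)) := by
  have hp0 : (p:ℂ) ≠ 0 := Nat.cast_ne_zero.mpr hp.pos.ne'
  have hp1 : (1:ℝ) < (p:ℝ) := by exact_mod_cast hp.one_lt
  set x : ℂ := (p:ℂ)^(-α) with hxdef
  set y : ℂ := (p:ℂ)^(-β) with hydef
  set q : ℂ := (p:ℂ)^(-2*γ) with hqdef
  have hnorm : ∀ s : ℂ, s.re < 0 → ‖(p:ℂ)^s‖ < 1 := by
    intro s hs
    rw [Complex.norm_natCast_cpow_of_pos hp.pos]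
    exact Real.rpow_lt_one_of_one_lt_of_neg hp1 hs
  have hx : ‖x‖ < 1 := hnorm _ (by simp [hα])
  have hy : ‖y‖ < 1 := hnorm _ (by simp [hβ])
  have hq : ‖q‖ < 1 := by
    apply hnorm
    simp only [mul_re]
    simp
    nlinarith [hγ]
  have htot : ∀ k : ℕ, ((p^k).totient : ℂ) / (p:ℂ)^((k:ℕ):ℂ) =
      if k = 0 then 1 else 1 - 1/(p:ℂ) := by
    intro k
    rw [Complex.cpow_natCast]
    cases k with
    | zero => simp
    | succ j =>
      rw [if_neg (Nat.succ_ne_zero j), Nat.totient_prime_pow hp (Nat.succ_pos j)]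
      rw [Nat.succ_sub_one]
      push_cast [Nat.cast_sub hp.one_le]
      field_simp
      ring
  have hsummand : ∀ n1 n2 : ℕ,
      ((n1 + 1 : ℕ) : ℂ) * ((n2 + 1 : ℕ) : ℂ) * (p:ℂ)^(-(n1:ℂ)*α - (n2:ℂ)*β) *
        (((p^(n1+n2)).totient : ℂ) / ((p:ℂ)^((n1+n2 : ℕ) : ℂ)))
      = ((n1 + 1 : ℕ) : ℂ) * ((n2 + 1 : ℕ) : ℂ) * (x^n1 * y^n2) *
          (if n1 + n2 = 0 then 1 else 1 - 1/(p:ℂ)) := by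
    intro n1 n2
    rw [htot, show (-(n1:ℂ)*α - (n2:ℂ)*β) = (n1:ℂ)*(-α) + (n2:ℂ)*(-β) by ring,
      Complex.cpow_add _ _ hp0, Complex.cpow_nat_mul, Complex.cpow_nat_mul]
  have hqpow : ∀ b : ℕ, (p:ℂ)^(-2*(b:ℂ)*γ) = q^b := by
    intro b
    rw [show (-2*(b:ℂ)*γ) = (b:ℂ)*(-2*γ) by ring, Complex.cpow_nat_mul]
  have eA : (p:ℂ)^(-2*α-2*γ) = x^2*q := by
    rw [show (-2*α-2*γ : ℂ) = ((2:ℕ):ℂ)*(-α) + (-2*γ) by push_cast; ring,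
      Complex.cpow_add _ _ hp0, Complex.cpow_nat_mul]
  have eB : (p:ℂ)^(-2*β-2*γ) = y^2*q := by
    rw [show (-2*β-2*γ : ℂ) = ((2:ℕ):ℂ)*(-β) + (-2*γ) by push_cast; ring,
      Complex.cpow_add _ _ hp0, Complex.cpow_nat_mul]
  have eAB : (p:ℂ)^(-α-β-2*γ) = x*y*q := by
    rw [show (-α-β-2*γ : ℂ) = (-α) + ((-β) + (-2*γ)) by ring,
      Complex.cpow_add _ _ hp0, Complex.cpow_add _ _ hp0]
    ring
  calc (∑' b : ℕ, (p:ℂ)^(-2*(b:ℂ)*γ) *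
      ∑ n1 ∈ Finset.range (2*b + 1), ∑ n2 ∈ Finset.range (2*b + 1),
        (if n1 + n2 ≤ 2*b ∧ Even (n1 + n2) then
          ((n1 + 1 : ℕ) : ℂ) * ((n2 + 1 : ℕ) : ℂ) * (p:ℂ)^(-(n1:ℂ)*α - (n2:ℂ)*β) *
            (((p^(n1+n2)).totient : ℂ) / ((p:ℂ)^((n1+n2 : ℕ) : ℂ)))
        else 0))
      = (∑' b : ℕ, q^b *
        ∑ n1 ∈ Finset.range (2*b + 1), ∑ n2 ∈ Finset.range (2*b + 1),
          (if n1 + n2 ≤ 2*b ∧ Even (n1 + n2) then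
            ((n1 + 1 : ℕ) : ℂ) * ((n2 + 1 : ℕ) : ℂ) * (x^n1 * y^n2) *
              (if n1 + n2 = 0 then 1 else 1 - 1/(p:ℂ))
          else 0)) := by
        apply tsum_congr
        intro b
        rw [hqpow b]
        congr 1
        apply Finset.sum_congr rfl
        intro n1 _
        apply Finset.sum_congr rfl
        intro n2 _
        exact if_congr Iff.rfl (hsummand n1 n2) rfl
    _ = (1 - q)⁻¹ *
        (1/(p:ℂ) + (1 - 1/(p:ℂ)) * ((1 + x^2*q) * (1 + y^2*q) + 4*(x*y*q)) /
          ((1 - x^2*q)^2 * (1 - y^2*q)^2)) := abstract_key hx hy hq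
    _ = _ := by rw [eA, eB, eAB]
end
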